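/- arXiv:2512.03410 — 4 statements merged into one kernel-verified Lean document; each statement's English description precedes it below -/
import Mathlib

section
/- Let W ≻ 0 be symmetric, and define ψ(x) = sqrt(min over z in a closed convex set Z of the convex quadratic J(x,z)) where J(x,z) = (x,z)ᵀ M (x,z) with M ⪰ 0 and its bottom-right block H ≻ 0, top-left block W, off-diagonal block G. Then ψ is Lipschitz: |ψ(x) − ψ(y)| ≤ ||x − y||_W, where ||v||_W = sqrt(vᵀWv). -/
open Matrix

private lemma dot_cs {m : Type*} [Fintype m] (a b : m → ℝ) :
    a ⬝ᵥ b ≤ Real.sqrt (a ⬝ᵥ a) * Real.sqrt (b ⬝ᵥ b) := by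
  let x : EuclideanSpace ℝ m := WithLp.toLp 2 a
  let y : EuclideanSpace ℝ m := WithLp.toLp 2 b
  have h1 : a ⬝ᵥ b = inner ℝ x y := by
    simp [PiLp.inner_apply, dotProduct, RCLike.inner_apply, mul_comm, x, y]
  have h2 : Real.sqrt (a ⬝ᵥ a) = ‖x‖ := by
    rw [EuclideanSpace.norm_eq]; congr 1; simp [dotProduct, sq, x]
  have h3 : Real.sqrt (b ⬝ᵥ b) = ‖y‖ := by
    rw [EuclideanSpace.norm_eq]; congr 1; simp [dotProduct, sq, y]
  rw [h1, h2, h3]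
  exact real_inner_le_norm x y

private lemma psd_triangle {m : Type*} [Fintype m] [DecidableEq m] {M : Matrix m m ℝ} (hM : M.PosSemidef)
    (u v : m → ℝ) :
    Real.sqrt ((u + v) ⬝ᵥ M.mulVec (u + v)) ≤
      Real.sqrt (u ⬝ᵥ M.mulVec u) + Real.sqrt (v ⬝ᵥ M.mulVec v) := by
  obtain ⟨B, hB⟩ : ∃ B : Matrix m m ℝ, M = star B * B := by
    open scoped MatrixOrder in exact CStarAlgebra.nonneg_iff_eq_star_mul_self.mp hM.nonneg
  have key : ∀ a b : m → ℝ, a ⬝ᵥ M.mulVec b = (B.mulVec a) ⬝ᵥ (B.mulVec b) := by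
    intro a b
    rw [hB, Matrix.star_eq_conjTranspose, Matrix.conjTranspose_eq_transpose_of_trivial, ← Matrix.mulVec_mulVec,
      Matrix.dotProduct_mulVec, Matrix.vecMul_transpose]
  have hcs : u ⬝ᵥ M.mulVec v ≤ Real.sqrt (u ⬝ᵥ M.mulVec u) * Real.sqrt (v ⬝ᵥ M.mulVec v) := by
    rw [key u v, key u u, key v v]; exact dot_cs _ _
  have hcs' : v ⬝ᵥ M.mulVec u ≤ Real.sqrt (u ⬝ᵥ M.mulVec u) * Real.sqrt (v ⬝ᵥ M.mulVec v) := by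
    rw [key v u, key u u, key v v, mul_comm]; exact dot_cs _ _
  have hnn : (0:ℝ) ≤ Real.sqrt (u ⬝ᵥ M.mulVec u) + Real.sqrt (v ⬝ᵥ M.mulVec v) := by positivity
  rw [show Real.sqrt (u ⬝ᵥ M.mulVec u) + Real.sqrt (v ⬝ᵥ M.mulVec v)
      = Real.sqrt ((Real.sqrt (u ⬝ᵥ M.mulVec u) + Real.sqrt (v ⬝ᵥ M.mulVec v))^2) from
      (Real.sqrt_sq hnn).symm]
  apply Real.sqrt_le_sqrt
  have hu := Real.sq_sqrt (show (0:ℝ) ≤ u ⬝ᵥ M.mulVec u by simpa using hM.dotProduct_mulVec_nonneg u)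
  have hv := Real.sq_sqrt (show (0:ℝ) ≤ v ⬝ᵥ M.mulVec v by simpa using hM.dotProduct_mulVec_nonneg v)
  have hexp : (u + v) ⬝ᵥ M.mulVec (u + v)
      = u ⬝ᵥ M.mulVec u + u ⬝ᵥ M.mulVec v + v ⬝ᵥ M.mulVec u + v ⬝ᵥ M.mulVec v := by
    simp [Matrix.mulVec_add, add_dotProduct, dotProduct_add]; ring
  rw [hexp, add_sq]
  nlinarith [hcs, hcs', hu, hv]
set_option maxHeartbeats 1000000 in
/-- The square root `ψ` of the optimal value of the parametric convex QP
`min_{z ∈ Z} (x,z)ᵀ M (x,z)` with `M = [[W, Gᵀ],[G, H]] ⪰ 0`, `W ≻ 0`, `H ≻ 0`,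
is Lipschitz in the `W`-norm: `|ψ(x) − ψ(y)| ≤ ‖x − y‖_W`. -/
theorem stmt8 {n p : ℕ} (W : Matrix (Fin n) (Fin n) ℝ) (G : Matrix (Fin p) (Fin n) ℝ)
    (H : Matrix (Fin p) (Fin p) ℝ)
    (hW : W.PosDef) (hH : H.PosDef)
    (hM : (Matrix.fromBlocks W Gᵀ G H).PosSemidef)
    (Z : Set (Fin p → ℝ)) (hZne : Z.Nonempty) (hZcl : IsClosed Z) (hZcvx : Convex ℝ Z)
    (J : (Fin n → ℝ) → (Fin p → ℝ) → ℝ)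
    (hJ : ∀ x z, J x z =
      (Sum.elim x z) ⬝ᵥ (Matrix.fromBlocks W Gᵀ G H).mulVec (Sum.elim x z))
    (ψ : (Fin n → ℝ) → ℝ)
    (hψ : ∀ x, ψ x = Real.sqrt (sInf {r : ℝ | ∃ z ∈ Z, r = J x z})) :
    ∀ x y : Fin n → ℝ, |ψ x - ψ y| ≤ Real.sqrt ((x - y) ⬝ᵥ W.mulVec (x - y)) := by
  set M := Matrix.fromBlocks W Gᵀ G H with hMdef
  -- basic facts
  have hJnn : ∀ x z, 0 ≤ J x z := by
    intro x z; rw [hJ]; simpa using hM.dotProduct_mulVec_nonneg (Sum.elim x z)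
  have hbdd : ∀ x, BddBelow {r : ℝ | ∃ z ∈ Z, r = J x z} :=
    fun x => ⟨0, fun r ⟨z, _, hr⟩ => hr ▸ hJnn x z⟩
  have hne : ∀ x, ({r : ℝ | ∃ z ∈ Z, r = J x z}).Nonempty := by
    intro x; obtain ⟨z₀, hz₀⟩ := hZne; exact ⟨J x z₀, z₀, hz₀, rfl⟩
  have hψnn : ∀ x, 0 ≤ ψ x := fun x => (hψ x) ▸ Real.sqrt_nonneg _
  have hWq : ∀ u : Fin n → ℝ, (Sum.elim u 0) ⬝ᵥ M.mulVec (Sum.elim u 0) = u ⬝ᵥ W.mulVec u := by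
    intro u
    simp [hMdef, Matrix.fromBlocks_mulVec, sumElim_dotProduct_sumElim,
      Matrix.mulVec_zero]
  -- key one-sided estimate
  have key : ∀ x y : Fin n → ℝ, ψ x - ψ y ≤ Real.sqrt ((x - y) ⬝ᵥ W.mulVec (x - y)) := by
    intro x y
    set c := Real.sqrt ((x - y) ⬝ᵥ W.mulVec (x - y)) with hc
    have hcnn : 0 ≤ c := Real.sqrt_nonneg _
    have step : ∀ z ∈ Z, ψ x - c ≤ Real.sqrt (J y z) := by
      intro z hz
      have h1 : ψ x ≤ Real.sqrt (J x z) := by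
        rw [hψ]
        exact Real.sqrt_le_sqrt (csInf_le (hbdd x) ⟨z, hz, rfl⟩)
      have h2 : Real.sqrt (J x z) ≤ Real.sqrt (J y z) + c := by
        have hsum : Sum.elim x z = Sum.elim y z + Sum.elim (x - y) 0 := by
          funext i; cases i <;> simp
        rw [hJ x z, hJ y z, hsum, hc, ← hWq (x - y)]
        exact psd_triangle hM _ _
      linarith
    rcases le_or_gt (ψ x - c) 0 with h | h
    · linarith [hψnn y]
    · have hJy : ∀ z ∈ Z, (ψ x - c)^2 ≤ J y z := by
        intro z hz
        exact (Real.le_sqrt' h).mp (step z hz)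
      have hInf : (ψ x - c)^2 ≤ sInf {r : ℝ | ∃ z ∈ Z, r = J y z} :=
        le_csInf (hne y) (fun r ⟨z, hz, hr⟩ => hr ▸ hJy z hz)
      have : ψ x - c ≤ ψ y := by
        rw [hψ y]
        calc ψ x - c = Real.sqrt ((ψ x - c)^2) := (Real.sqrt_sq h.le).symm
          _ ≤ _ := Real.sqrt_le_sqrt hInf
      linarith
  intro x y
  rw [abs_sub_le_iff]
  refine ⟨key x y, ?_⟩
  have hswap : (y - x) ⬝ᵥ W.mulVec (y - x) = (x - y) ⬝ᵥ W.mulVec (x - y) := by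
    rw [show y - x = -(x - y) by ring, Matrix.mulVec_neg, neg_dotProduct,
      dotProduct_neg, neg_neg]
  calc ψ y - ψ x ≤ Real.sqrt ((y - x) ⬝ᵥ W.mulVec (y - x)) := key y x
    _ = _ := by rw [hswap]
end

section
/- With the same parametric QP setup, the solution mapping z*(x) = argmin_{z∈Z} J(x,z) satisfies the monotonicity property ⟨z*(x) − z*(y), G(x − y)⟩ ≤ −||z*(x) − z*(y)||²_H, for all x, y. -/
open Matrix

/-- The solution map `z*(x)` of the parametric QP satisfies the monotonicity property
`⟨z*(x) − z*(y), G(x − y)⟩ ≤ −‖z*(x) − z*(y)‖²_H`. -/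
theorem stmt9 {n p : ℕ} (W : Matrix (Fin n) (Fin n) ℝ) (G : Matrix (Fin p) (Fin n) ℝ)
    (H : Matrix (Fin p) (Fin p) ℝ)
    (hW : W.PosDef) (hH : H.PosDef)
    (hM : (Matrix.fromBlocks W Gᵀ G H).PosSemidef)
    (Z : Set (Fin p → ℝ)) (hZne : Z.Nonempty) (hZcl : IsClosed Z) (hZcvx : Convex ℝ Z)
    (J : (Fin n → ℝ) → (Fin p → ℝ) → ℝ)
    (hJ : ∀ x z, J x z =
      (Sum.elim x z) ⬝ᵥ (Matrix.fromBlocks W Gᵀ G H).mulVec (Sum.elim x z))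
    (zstar : (Fin n → ℝ) → (Fin p → ℝ))
    (hzstar : ∀ x, zstar x ∈ Z ∧ ∀ z ∈ Z, J x (zstar x) ≤ J x z) :
    ∀ x y : Fin n → ℝ,
      (zstar x - zstar y) ⬝ᵥ G.mulVec (x - y)
        ≤ -((zstar x - zstar y) ⬝ᵥ H.mulVec (zstar x - zstar y)) := by
  have hHsymm : Hᵀ = H := hH.1
  have hWsymm : Wᵀ = W := hW.1
  -- symmetry of H in dot products
  have hswap : ∀ a b : Fin p → ℝ, a ⬝ᵥ H.mulVec b = b ⬝ᵥ H.mulVec a := by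
    intro a b
    rw [Matrix.dotProduct_mulVec, ← Matrix.mulVec_transpose, hHsymm, dotProduct_comm]
  -- Variational inequality
  have VI : ∀ x : Fin n → ℝ, ∀ z ∈ Z,
      0 ≤ (z - zstar x) ⬝ᵥ (G.mulVec x + H.mulVec (zstar x)) := by
    intro x z hz
    set u := zstar x with hu
    set d : Fin p → ℝ := z - u with hd
    set A : ℝ := d ⬝ᵥ (G.mulVec x + H.mulVec u) with hA
    set B : ℝ := d ⬝ᵥ H.mulVec d with hB
    have hB0 : 0 ≤ B := by
      have := hH.posSemidef.dotProduct_mulVec_nonneg d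
      simpa [hB] using this
    have key : ∀ t : ℝ, 0 < t → t ≤ 1 → 0 ≤ 2 * t * A + t ^ 2 * B := by
      intro t ht0 ht1
      have hmem : u + t • d ∈ Z := by
        have := hZcvx (hzstar x).1 hz (a := 1 - t) (b := t) (by linarith) (le_of_lt ht0)
          (by ring)
        have he : (1 - t) • u + t • z = u + t • d := by
          simp only [hd]; module
        rwa [he] at this
      have hle := (hzstar x).2 _ hmem
      rw [hJ, hJ] at hle
      have hsplit : Sum.elim x (u + t • d) = Sum.elim x u + Sum.elim (0 : Fin n → ℝ) (t • d) := by
        ext (i | i) <;> simp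
      rw [hsplit] at hle
      have hexp : (Sum.elim x u + Sum.elim (0 : Fin n → ℝ) (t • d)) ⬝ᵥ
          (Matrix.fromBlocks W Gᵀ G H).mulVec (Sum.elim x u + Sum.elim (0 : Fin n → ℝ) (t • d))
          = Sum.elim x u ⬝ᵥ (Matrix.fromBlocks W Gᵀ G H).mulVec (Sum.elim x u)
            + 2 * t * A + t ^ 2 * B := by
        simp only [Matrix.mulVec_add, dotProduct_add, add_dotProduct]
        have h1 : Sum.elim x u ⬝ᵥ (Matrix.fromBlocks W Gᵀ G H).mulVec (Sum.elim (0 : Fin n → ℝ) (t • d))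
            = Sum.elim (0 : Fin n → ℝ) (t • d) ⬝ᵥ (Matrix.fromBlocks W Gᵀ G H).mulVec (Sum.elim x u) := by
          rw [Matrix.dotProduct_mulVec, ← Matrix.mulVec_transpose]
          rw [show (Matrix.fromBlocks W Gᵀ G H)ᵀ = Matrix.fromBlocks W Gᵀ G H from by
            simp [Matrix.fromBlocks_transpose, hHsymm, hWsymm]]
          rw [dotProduct_comm]
        have h2 : Sum.elim (0 : Fin n → ℝ) (t • d) ⬝ᵥ (Matrix.fromBlocks W Gᵀ G H).mulVec (Sum.elim x u)
            = t * A := by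
          rw [Matrix.fromBlocks_mulVec, sumElim_dotProduct_sumElim]
          simp [hA, smul_dotProduct, dotProduct_add, mul_add]
        have h3 : Sum.elim (0 : Fin n → ℝ) (t • d) ⬝ᵥ (Matrix.fromBlocks W Gᵀ G H).mulVec (Sum.elim (0 : Fin n → ℝ) (t • d))
            = t ^ 2 * B := by
          rw [Matrix.fromBlocks_mulVec, sumElim_dotProduct_sumElim]
          simp [hB, smul_dotProduct, Matrix.mulVec_smul, dotProduct_smul]
          ring
        rw [h1, h2, h3]; ring
      rw [hexp] at hle
      linarith
    -- deduce 0 ≤ A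
    by_contra hAneg
    push_neg at hAneg
    rcases eq_or_lt_of_le hB0 with hB0' | hBpos
    · have := key 1 one_pos le_rfl
      nlinarith
    · set t : ℝ := min 1 (-A / B) with htdef
      have ht0 : 0 < t := lt_min one_pos (div_pos (by linarith) hBpos)
      have ht1 : t ≤ 1 := min_le_left _ _
      have htAB : t ≤ -A / B := min_le_right _ _
      have := key t ht0 ht1
      have htB : t * B ≤ -A := (le_div_iff₀ hBpos).mp htAB
      nlinarith
  intro x y
  have h1 := VI x (zstar y) (hzstar y).1
  have h2 := VI y (zstar x) (hzstar x).1
  have hs := hswap (zstar x - zstar y) (zstar y - zstar x)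
  simp only [dotProduct_add, sub_dotProduct, dotProduct_sub, Matrix.mulVec_sub] at h1 h2 hs ⊢
  linarith
end

section
/- With the same parametric QP setup, the solution mapping is Lipschitz in weighted norms: ||z*(x) − z*(y)||_H ≤ ||G(x − y)||_{H⁻¹} for all x, y, where ||v||_H = sqrt(vᵀHv) and ||w||_{H⁻¹} = sqrt(wᵀH⁻¹w). -/
open Matrix

/-- The solution map `z*(x)` of the parametric QP is Lipschitz in weighted norms:
`‖z*(x) − z*(y)‖_H ≤ ‖G(x − y)‖_{H⁻¹}`. -/
theorem stmt10 {n p : ℕ} (W : Matrix (Fin n) (Fin n) ℝ) (G : Matrix (Fin p) (Fin n) ℝ)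
    (H : Matrix (Fin p) (Fin p) ℝ)
    (hW : W.PosDef) (hH : H.PosDef)
    (hM : (Matrix.fromBlocks W Gᵀ G H).PosSemidef)
    (Z : Set (Fin p → ℝ)) (hZne : Z.Nonempty) (hZcl : IsClosed Z) (hZcvx : Convex ℝ Z)
    (J : (Fin n → ℝ) → (Fin p → ℝ) → ℝ)
    (hJ : ∀ x z, J x z =
      (Sum.elim x z) ⬝ᵥ (Matrix.fromBlocks W Gᵀ G H).mulVec (Sum.elim x z))
    (zstar : (Fin n → ℝ) → (Fin p → ℝ))
    (hzstar : ∀ x, zstar x ∈ Z ∧ ∀ z ∈ Z, J x (zstar x) ≤ J x z) :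
    ∀ x y : Fin n → ℝ,
      Real.sqrt ((zstar x - zstar y) ⬝ᵥ H.mulVec (zstar x - zstar y))
        ≤ Real.sqrt ((G.mulVec (x - y)) ⬝ᵥ H⁻¹.mulVec (G.mulVec (x - y))) := by
  classical
  intro x y
  have hHs : Hᵀ = H := by
    have := hH.isHermitian
    simpa [Matrix.IsHermitian] using this
  have hdet : IsUnit H.det := hH.det_pos.ne'.isUnit
  have hHinv : H * H⁻¹ = 1 := Matrix.mul_nonsing_inv H hdet
  -- symmetry of the H-form
  have hsymm : ∀ u v : Fin p → ℝ, u ⬝ᵥ H *ᵥ v = v ⬝ᵥ H *ᵥ u := by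
    intro u v
    rw [Matrix.dotProduct_mulVec, ← Matrix.mulVec_transpose, hHs, dotProduct_comm]
  have hnng : ∀ u : Fin p → ℝ, 0 ≤ u ⬝ᵥ H *ᵥ u := by
    intro u; simpa using hH.posSemidef.dotProduct_mulVec_nonneg u
  -- expansion of J
  have hJ' : ∀ x z, J x z = x ⬝ᵥ W *ᵥ x + (z ⬝ᵥ H *ᵥ z + 2 * (z ⬝ᵥ G *ᵥ x)) := by
    intro x z
    rw [hJ, Matrix.fromBlocks_mulVec, sumElim_dotProduct_sumElim]
    have hcross : x ⬝ᵥ Gᵀ *ᵥ z = z ⬝ᵥ G *ᵥ x := by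
      rw [Matrix.dotProduct_mulVec, Matrix.vecMul_transpose, dotProduct_comm]
    simp only [Sum.elim_comp_inl, Sum.elim_comp_inr]
    rw [dotProduct_add, dotProduct_add, hcross]
    ring
  -- variational inequality
  have hVI : ∀ (x : Fin n → ℝ) (z : Fin p → ℝ), z ∈ Z →
      0 ≤ (z - zstar x) ⬝ᵥ (H *ᵥ zstar x + G *ᵥ x) := by
    intro x z hz
    have hd0 : ∀ t : ℝ, 0 ≤ t → t ≤ 1 →
        0 ≤ t ^ 2 * ((z - zstar x) ⬝ᵥ H *ᵥ (z - zstar x))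
          + 2 * t * ((z - zstar x) ⬝ᵥ (H *ᵥ zstar x + G *ᵥ x)) := by
      intro t ht0 ht1
      have hmem : zstar x + t • (z - zstar x) ∈ Z := by
        have := hZcvx (hzstar x).1 hz (by linarith : (0:ℝ) ≤ 1 - t) ht0 (by ring)
        convert this using 1
        funext i
        simp [Pi.smul_apply, smul_eq_mul]
        ring
      have hle := (hzstar x).2 _ hmem
      rw [hJ' x, hJ' x] at hle
      have hsy : zstar x ⬝ᵥ H *ᵥ z = z ⬝ᵥ H *ᵥ zstar x := hsymm _ _
      simp only [Matrix.mulVec_add, Matrix.mulVec_smul, Matrix.mulVec_sub, dotProduct_add,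
        add_dotProduct, dotProduct_sub, sub_dotProduct, dotProduct_smul, smul_dotProduct,
        smul_eq_mul] at hle ⊢
      rw [hsy] at hle ⊢
      nlinarith [hle]
    set a := (z - zstar x) ⬝ᵥ H *ᵥ (z - zstar x) with ha
    set b := (z - zstar x) ⬝ᵥ (H *ᵥ zstar x + G *ᵥ x) with hb
    have hanng : 0 ≤ a := hnng _
    by_contra hcon
    push_neg at hcon
    rcases eq_or_lt_of_le hanng with haz | hap
    · have h2 := hd0 1 zero_le_one le_rfl
      rw [← haz] at h2
      nlinarith [h2]
    · rcases le_or_gt (-b / a) 1 with h1 | h1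
      · have ht0 : 0 ≤ -b / a := div_nonneg (by linarith) hap.le
        have h2 := hd0 (-b / a) ht0 h1
        have h3 : (-b / a) ^ 2 * a + 2 * (-b / a) * b = -(b ^ 2) / a := by
          field_simp
          ring
        rw [h3] at h2
        have hb2 : (0:ℝ) < b ^ 2 := by nlinarith [mul_pos (neg_pos.mpr hcon) (neg_pos.mpr hcon)]
        have : -(b ^ 2) / a < 0 := div_neg_of_neg_of_pos (by linarith) hap
        linarith
      · have h2 := hd0 1 zero_le_one le_rfl
        have h4 : a < -b := by
          have := (lt_div_iff₀ hap).mp h1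
          linarith
        linarith
  -- monotonicity
  set d := zstar x - zstar y with hd
  have hm1 := hVI x (zstar y) (hzstar y).1
  have hm2 := hVI y (zstar x) (hzstar x).1
  set g := G *ᵥ (x - y) with hg
  have hmono : d ⬝ᵥ H *ᵥ d ≤ -(d ⬝ᵥ g) := by
    have e1 : (zstar y - zstar x) = -d := by rw [hd]; ring
    rw [e1] at hm1
    have e2 : (zstar x - zstar y) = d := hd.symm
    rw [e2] at hm2
    have key : 0 ≤ d ⬝ᵥ (H *ᵥ zstar y + G *ᵥ y) - d ⬝ᵥ (H *ᵥ zstar x + G *ᵥ x) := by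
      simp only [neg_dotProduct] at hm1
      linarith
    have expand : d ⬝ᵥ (H *ᵥ zstar y + G *ᵥ y) - d ⬝ᵥ (H *ᵥ zstar x + G *ᵥ x)
        = -(d ⬝ᵥ H *ᵥ d) - d ⬝ᵥ g := by
      rw [hg, hd]
      simp only [dotProduct_add, Matrix.mulVec_sub, dotProduct_sub, Matrix.sub_mulVec,
        sub_dotProduct]
      ring
    rw [expand] at key
    linarith
  -- Cauchy–Schwarz in the H inner product
  set w := H⁻¹ *ᵥ g with hw
  have hHw : H *ᵥ w = g := by
    rw [hw, Matrix.mulVec_mulVec, hHinv, Matrix.one_mulVec]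
  set a := d ⬝ᵥ H *ᵥ d with ha
  set c := g ⬝ᵥ H⁻¹ *ᵥ g with hc
  have hcw : w ⬝ᵥ H *ᵥ w = c := by
    rw [hHw, hc, hw, dotProduct_comm]
  have hbg : d ⬝ᵥ H *ᵥ w = d ⬝ᵥ g := by rw [hHw]
  have hanng : 0 ≤ a := hnng d
  have hcnng : 0 ≤ c := by rw [← hcw]; exact hnng w
  -- quadratic in t : 0 ≤ c t² + 2 (d⬝ᵥg) t + a
  have hquad : ∀ t : ℝ, 0 ≤ c * (t * t) + (2 * (d ⬝ᵥ g)) * t + a := by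
    intro t
    have h0 := hnng (d + t • w)
    have hexp : (d + t • w) ⬝ᵥ H *ᵥ (d + t • w)
        = c * (t * t) + (2 * (d ⬝ᵥ g)) * t + a := by
      simp only [Matrix.mulVec_add, Matrix.mulVec_smul, dotProduct_add, add_dotProduct,
        dotProduct_smul, smul_dotProduct, smul_eq_mul]
      rw [hsymm w d, hbg, ← hcw, ha]
      ring
    rw [hexp] at h0
    exact h0
  have hdisc : discrim c (2 * (d ⬝ᵥ g)) a ≤ 0 := discrim_le_zero hquad
  have hcs : (d ⬝ᵥ g) ^ 2 ≤ a * c := by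
    rw [discrim] at hdisc
    nlinarith [hdisc]
  -- combine
  have h1 : a ≤ Real.sqrt a * Real.sqrt c := by
    calc a ≤ -(d ⬝ᵥ g) := hmono
      _ ≤ |d ⬝ᵥ g| := neg_le_abs _
      _ = Real.sqrt ((d ⬝ᵥ g) ^ 2) := (Real.sqrt_sq_eq_abs _).symm
      _ ≤ Real.sqrt (a * c) := Real.sqrt_le_sqrt hcs
      _ = Real.sqrt a * Real.sqrt c := Real.sqrt_mul hanng c
  rcases eq_or_lt_of_le (Real.sqrt_nonneg a) with hz | hz
  · rw [← hz]; exact Real.sqrt_nonneg c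
  · have h2 : Real.sqrt a * Real.sqrt a ≤ Real.sqrt a * Real.sqrt c := by
      rw [Real.mul_self_sqrt hanng]; exact h1
    exact le_of_mul_le_mul_left h2 hz
end

section
/- Let V: ℝⁿ → ℝ≥0 and suppose for state x there exists a feasible input sequence z with cost L(z) = Σ stage costs and terminal state in the interior of Ω (so F(ξ_N) ≤ ρα for some ρ < 1). Then choosing ω ≥ max(ε, (L(z) − Nγ)/((1−ρ)α)) ensures L(z) + ω·F(ξ_N) ≤ Nγ + ωα; i.e., x lies in the backward reachable set estimate Υ_N(ω) = {x : V_N(x) ≤ Nγ + ωα}. -/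
/-- Theorem 1 / equation (7): if a feasible sequence has stage cost `L` and terminal value
`F(ξ_N) ≤ ρα` with `ρ < 1`, then `ω ≥ max(ε, (L − Nγ)/((1−ρ)α))` guarantees
`L + ω F(ξ_N) ≤ Nγ + ωα`, hence `V_N(x) ≤ Nγ + ωα`, i.e. `x ∈ Υ_N(ω)`. -/
theorem stmt16 (N : ℕ) (hN : 1 ≤ N) (L γ ε α ρ ω FxiN V : ℝ)
    (hL : 0 ≤ L) (hγ : 0 < γ) (hε : 0 < ε) (hα : 0 < α)
    (hρ0 : 0 < ρ) (hρ1 : ρ < 1)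
    (hFnn : 0 ≤ FxiN) (hFle : FxiN ≤ ρ * α)
    (hω : max ε ((L - N * γ) / ((1 - ρ) * α)) ≤ ω)
    (hV : V ≤ L + ω * FxiN) :
    L + ω * FxiN ≤ N * γ + ω * α ∧ V ≤ N * γ + ω * α := by
  have hωpos : 0 < ω := lt_of_lt_of_le hε (le_trans (le_max_left _ _) hω)
  have hden : 0 < (1 - ρ) * α := mul_pos (by linarith) hα
  have h1 : (L - N * γ) / ((1 - ρ) * α) ≤ ω := le_trans (le_max_right _ _) hω
  have h2 : L - N * γ ≤ ω * ((1 - ρ) * α) := (div_le_iff₀ hden).mp h1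
  have h3 : ω * FxiN ≤ ω * (ρ * α) := mul_le_mul_of_nonneg_left hFle hωpos.le
  have key : L + ω * FxiN ≤ N * γ + ω * α := by nlinarith
  exact ⟨key, le_trans hV key⟩
end
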